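/- Let f ∈ C¹(R^d) with |∂^α f(x)| ≤ C_α ⟨x⟩^{-(1+δ_α)} for all |α| = 1, where δ_α > 0. Define F(x,y,z) = ∫₀¹∫₀¹ σ₁ f(z + σ₁(x−z) + σ₁σ₂(y−x)) dσ₁ dσ₂. Then for each multi-index (α,β,γ) with |α+β+γ| = 1 there is a constant C such that |x−z| · |∂_x^α ∂_y^β ∂_z^γ F(x,y,z)| ≤ C for all x, y, z ∈ R^d. -/

import Mathlib

open Real intervalIntegral MeasureTheory Set Metric Function

noncomputable section BrokenPathAux

/-- The integral `∫ (1+u²)^{-(1+δ)/2} du` over `ℝ`. -/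
def Idel (δ : ℝ) : ℝ := ∫ u : ℝ, ((1:ℝ) + u ^ 2) ^ (-(1+δ)/2 : ℝ)

lemma integrable_phi {δ : ℝ} (hδ : 0 < δ) :
    Integrable (fun u : ℝ => ((1:ℝ) + u ^ 2) ^ (-(1+δ)/2 : ℝ)) := by
  have h := integrable_rpow_neg_one_add_norm_sq (E := ℝ) (μ := volume) (r := 1+δ)
    (by simp; linarith)
  simpa [Real.norm_eq_abs, sq_abs, neg_div] using h

lemma Idel_nonneg {δ : ℝ} : 0 ≤ Idel δ :=
  integral_nonneg fun u => Real.rpow_nonneg (by positivity) _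

section InnerSpace

variable {E : Type*} [NormedAddCommGroup E] [InnerProductSpace ℝ E]

lemma cont_bracket {X : Type*} [TopologicalSpace X] {g : X → E} (hg : Continuous g) (r : ℝ) :
    Continuous fun x => ((1:ℝ) + ‖g x‖ ^ 2) ^ (r : ℝ) :=
  (continuous_const.add ((hg.norm).pow 2)).rpow_const (fun x => Or.inl (by show (1:ℝ) + ‖g x‖ ^ 2 ≠ 0; positivity))

lemma line_integral_bound {δ : ℝ} (hδ : 0 < δ) (a : E) {b : E} (hb : b ≠ 0) :
    ∫ σ in (0:ℝ)..1, ((1:ℝ) + ‖a + σ • b‖ ^ 2) ^ (-(1+δ)/2 : ℝ) ≤ Idel δ / ‖b‖ := by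
  have hbpos : (0:ℝ) < ‖b‖ := norm_pos_iff.mpr hb
  set c : ℝ := (inner ℝ a b : ℝ) / ‖b‖ with hc
  have hpt : ∀ σ : ℝ, ((1:ℝ) + ‖a + σ • b‖ ^ 2) ^ (-(1+δ)/2 : ℝ) ≤
      ((1:ℝ) + (‖b‖ * σ + c) ^ 2) ^ (-(1+δ)/2 : ℝ) := by
    intro σ
    have key : (‖b‖ * σ + c) ^ 2 ≤ ‖a + σ • b‖ ^ 2 := by
      have h1 : (inner ℝ (a + σ • b) b : ℝ) = ‖b‖ * (‖b‖ * σ + c) := by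
        rw [inner_add_left, real_inner_smul_left, real_inner_self_eq_norm_sq]
        field_simp [hc]
        rw [mul_add, mul_div_assoc', mul_comm ‖b‖ (inner ℝ a b), mul_div_assoc, div_self hbpos.ne', mul_one]; ring
      have h2 : |(inner ℝ (a + σ • b) b : ℝ)| ≤ ‖a + σ • b‖ * ‖b‖ := abs_real_inner_le_norm _ _
      rw [h1, abs_mul, abs_of_pos hbpos] at h2
      have h3 : |‖b‖ * σ + c| ≤ ‖a + σ • b‖ := by
        nlinarith [abs_nonneg (‖b‖ * σ + c)]
      nlinarith [abs_nonneg (‖b‖ * σ + c), sq_abs (‖b‖ * σ + c), norm_nonneg (a + σ • b)]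
    apply Real.rpow_le_rpow_of_nonpos (by positivity) (by linarith)
    have : (0:ℝ) < 1 + δ := by linarith
    linarith [div_nonneg this.le (by norm_num : (0:ℝ) ≤ 2)]
  have hint1 : IntervalIntegrable (fun σ : ℝ => ((1:ℝ) + ‖a + σ • b‖ ^ 2) ^ (-(1+δ)/2 : ℝ))
      volume 0 1 :=
    (cont_bracket (by continuity) _).intervalIntegrable _ _
  have hint2 : IntervalIntegrable (fun σ : ℝ => ((1:ℝ) + (‖b‖ * σ + c) ^ 2) ^ (-(1+δ)/2 : ℝ))
      volume 0 1 := by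
    have : Continuous fun σ : ℝ => ((1:ℝ) + (‖b‖ * σ + c) ^ 2) ^ (-(1+δ)/2 : ℝ) := by
      apply Continuous.rpow_const (by continuity) (fun x => Or.inl (by positivity))
    exact this.intervalIntegrable _ _
  calc ∫ σ in (0:ℝ)..1, ((1:ℝ) + ‖a + σ • b‖ ^ 2) ^ (-(1+δ)/2 : ℝ)
      ≤ ∫ σ in (0:ℝ)..1, ((1:ℝ) + (‖b‖ * σ + c) ^ 2) ^ (-(1+δ)/2 : ℝ) :=
        intervalIntegral.integral_mono_on zero_le_one hint1 hint2 (fun σ _ => hpt σ)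
    _ = ‖b‖⁻¹ • ∫ u in (‖b‖ * 0 + c)..(‖b‖ * 1 + c), ((1:ℝ) + u ^ 2) ^ (-(1+δ)/2 : ℝ) := by
        rw [← intervalIntegral.integral_comp_mul_add
          (fun u : ℝ => ((1:ℝ) + u ^ 2) ^ (-(1+δ)/2 : ℝ)) hbpos.ne' c]
    _ ≤ ‖b‖⁻¹ * Idel δ := by
        rw [smul_eq_mul]
        apply mul_le_mul_of_nonneg_left _ (by positivity)
        rw [intervalIntegral.integral_of_le (by linarith)]
        exact setIntegral_le_integral (integrable_phi hδ)
          (Filter.Eventually.of_forall fun u => Real.rpow_nonneg (by positivity) _)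
    _ = Idel δ / ‖b‖ := by rw [div_eq_inv_mul]

lemma swap01 {B : Type*} [NormedAddCommGroup B] [NormedSpace ℝ B] {f : ℝ → ℝ → B}
    (hc : Continuous (uncurry f)) :
    ∫ s in (0:ℝ)..1, ∫ t in (0:ℝ)..1, f s t = ∫ t in (0:ℝ)..1, ∫ s in (0:ℝ)..1, f s t := by
  simp only [intervalIntegral.integral_of_le (zero_le_one (α := ℝ))]
  apply MeasureTheory.integral_integral_swap
  rw [Measure.prod_restrict]
  have h1 : IntegrableOn (uncurry f) (Icc (0:ℝ) 1 ×ˢ Icc (0:ℝ) 1) (volume.prod volume) :=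
    (hc.continuousOn).integrableOn_compact (isCompact_Icc.prod isCompact_Icc)
  exact h1.mono_set (prod_mono Ioc_subset_Icc_self Ioc_subset_Icc_self)

lemma key2 {δ : ℝ} (hδ : 0 < δ) (x y z : E) :
    ‖x - z‖ * ∫ s in (0:ℝ)..1, ∫ t in (0:ℝ)..1,
      s * ((1:ℝ) + ‖z + s • (x - z) + (s * t) • (y - x)‖ ^ 2) ^ (-(1+δ)/2 : ℝ)
      ≤ 2 * Idel δ := by
  have hI : 0 ≤ Idel δ := Idel_nonneg
  set G : ℝ → ℝ → ℝ := fun s t =>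
    s * ((1:ℝ) + ‖z + s • (x - z) + (s * t) • (y - x)‖ ^ 2) ^ (-(1+δ)/2 : ℝ) with hG
  have contg : Continuous fun q : ℝ × ℝ => z + q.1 • (x - z) + (q.1 * q.2) • (y - x) := by
    continuity
  have contInt : Continuous (uncurry G) := continuous_fst.mul (cont_bracket contg _)
  by_cases hxz : x = z
  · simp [hxz, sub_self]
    positivity
  have hxzpos : (0:ℝ) < ‖x - z‖ := norm_pos_iff.mpr (sub_ne_zero.mpr hxz)
  rcases le_or_gt ‖x - z‖ (2 * ‖y - x‖) with hle | hgt
  · have hyx : y ≠ x := by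
      intro h; rw [h, sub_self, norm_zero] at hle; linarith
    have hyxpos : (0:ℝ) < ‖y - x‖ := norm_pos_iff.mpr (sub_ne_zero.mpr hyx)
    have hinner : ∀ s ∈ Icc (0:ℝ) 1,
        (∫ t in (0:ℝ)..1, G s t) ≤ 2 * Idel δ / ‖x - z‖ := by
      intro s hs
      rcases eq_or_lt_of_le hs.1 with h0 | hspos
      · simp [hG, ← h0]
        positivity
      · have hrw : ∀ t : ℝ, z + s • (x - z) + (s * t) • (y - x)
            = (z + s • (x - z)) + t • (s • (y - x)) := by
          intro t; rw [mul_comm, mul_smul]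
        have hb : s • (y - x) ≠ 0 :=
          smul_ne_zero hspos.ne' (sub_ne_zero.mpr hyx)
        calc (∫ t in (0:ℝ)..1, G s t)
            = s * ∫ t in (0:ℝ)..1,
              ((1:ℝ) + ‖(z + s • (x - z)) + t • (s • (y - x))‖ ^ 2) ^ (-(1+δ)/2 : ℝ) := by
              rw [← intervalIntegral.integral_const_mul]
              congr 1; funext t; rw [hG]; simp only [hrw t]
          _ ≤ s * (Idel δ / ‖s • (y - x)‖) :=
              mul_le_mul_of_nonneg_left (line_integral_bound hδ _ hb) hspos.le
          _ = Idel δ / ‖y - x‖ := by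
              rw [norm_smul, Real.norm_eq_abs, abs_of_pos hspos]
              field_simp
          _ ≤ 2 * Idel δ / ‖x - z‖ := by
              rw [div_le_div_iff₀ hyxpos hxzpos]
              nlinarith
    have hcont1 : Continuous fun s => ∫ t in (0:ℝ)..1, G s t :=
      intervalIntegral.continuous_parametric_intervalIntegral_of_continuous' contInt 0 1
    have houter : (∫ s in (0:ℝ)..1, ∫ t in (0:ℝ)..1, G s t)
        ≤ ∫ _ in (0:ℝ)..1, (2 * Idel δ / ‖x - z‖) :=
      intervalIntegral.integral_mono_on zero_le_one (hcont1.intervalIntegrable _ _)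
        (intervalIntegrable_const) hinner
    rw [intervalIntegral.integral_const, smul_eq_mul, sub_zero, one_mul] at houter
    calc ‖x - z‖ * ∫ s in (0:ℝ)..1, ∫ t in (0:ℝ)..1, G s t
        ≤ ‖x - z‖ * (2 * Idel δ / ‖x - z‖) :=
          mul_le_mul_of_nonneg_left houter hxzpos.le
      _ = 2 * Idel δ := by field_simp
  · rw [swap01 contInt]
    have hinner : ∀ t ∈ Icc (0:ℝ) 1,
        (∫ s in (0:ℝ)..1, G s t) ≤ 2 * Idel δ / ‖x - z‖ := by
      intro t ht
      set w : E := (x - z) + t • (y - x) with hw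
      have hrw : ∀ s : ℝ, z + s • (x - z) + (s * t) • (y - x) = z + s • w := by
        intro s; rw [hw, smul_add, mul_smul]; abel
      have hwn : ‖x - z‖ / 2 ≤ ‖w‖ := by
        have h1 : x - z = w - t • (y - x) := by rw [hw]; abel
        have h2 : ‖x - z‖ ≤ ‖w‖ + ‖t • (y - x)‖ := by
          rw [h1]; exact norm_sub_le _ _
        have h3 : ‖t • (y - x)‖ ≤ ‖y - x‖ := by
          rw [norm_smul, Real.norm_eq_abs, abs_of_nonneg ht.1]
          exact mul_le_of_le_one_left (norm_nonneg _) ht.2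
        linarith
      have hwne : w ≠ 0 := by
        intro h; rw [h, norm_zero] at hwn; linarith
      have hint1 : IntervalIntegrable (fun s => G s t) volume 0 1 :=
        ((contInt.comp (continuous_id.prodMk continuous_const)) :
          Continuous fun s => G s t).intervalIntegrable _ _
      have hint2 : IntervalIntegrable
          (fun s : ℝ => ((1:ℝ) + ‖z + s • w‖ ^ 2) ^ (-(1+δ)/2 : ℝ)) volume 0 1 :=
        (cont_bracket (by continuity) _).intervalIntegrable _ _
      calc (∫ s in (0:ℝ)..1, G s t)
          ≤ ∫ s in (0:ℝ)..1, ((1:ℝ) + ‖z + s • w‖ ^ 2) ^ (-(1+δ)/2 : ℝ) := by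
            apply intervalIntegral.integral_mono_on zero_le_one hint1 hint2
            intro s hs
            rw [hG]; simp only [hrw s]
            exact mul_le_of_le_one_left (Real.rpow_nonneg (by positivity) _) hs.2
        _ ≤ Idel δ / ‖w‖ := line_integral_bound hδ z hwne
        _ ≤ 2 * Idel δ / ‖x - z‖ := by
            rw [div_le_div_iff₀ (by linarith : (0:ℝ) < ‖w‖) hxzpos]
            nlinarith
    have hcont1 : Continuous fun t => ∫ s in (0:ℝ)..1, G s t := by
      have : Continuous (uncurry fun t s => G s t) := contInt.comp continuous_swap
      exact intervalIntegral.continuous_parametric_intervalIntegral_of_continuous' this 0 1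
    have houter : (∫ t in (0:ℝ)..1, ∫ s in (0:ℝ)..1, G s t)
        ≤ ∫ _ in (0:ℝ)..1, (2 * Idel δ / ‖x - z‖) :=
      intervalIntegral.integral_mono_on zero_le_one (hcont1.intervalIntegrable _ _)
        (intervalIntegrable_const) hinner
    rw [intervalIntegral.integral_const, smul_eq_mul, sub_zero, one_mul] at houter
    calc ‖x - z‖ * ∫ t in (0:ℝ)..1, ∫ s in (0:ℝ)..1, G s t
        ≤ ‖x - z‖ * (2 * Idel δ / ‖x - z‖) :=
          mul_le_mul_of_nonneg_left houter hxzpos.le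
      _ = 2 * Idel δ := by field_simp

end InnerSpace

lemma coord_abs_le_norm {d : ℕ} (v : EuclideanSpace ℝ (Fin d)) (i : Fin d) : |v i| ≤ ‖v‖ := by
  rw [EuclideanSpace.norm_eq]
  have h1 : |v i| = Real.sqrt (‖v i‖ ^ 2) := by
    rw [Real.sqrt_sq_eq_abs]; simp
  rw [h1]
  apply Real.sqrt_le_sqrt
  exact Finset.single_le_sum (f := fun j => ‖v j‖ ^ 2) (fun j _ => by positivity)
    (Finset.mem_univ i)

lemma euclidean_decomp {d : ℕ} (v : EuclideanSpace ℝ (Fin d)) :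
    v = ∑ i : Fin d, v i • EuclideanSpace.single i (1:ℝ) := by
  ext j
  rw [WithLp.ofLp_sum, Fintype.sum_apply]
  simp [EuclideanSpace.single_apply]

lemma fderiv_op_bound {d : ℕ} (f : EuclideanSpace ℝ (Fin d) → ℝ)
    (hder : ∀ i : Fin d, ∃ C δ : ℝ, 0 < C ∧ 0 < δ ∧ ∀ x,
      |fderiv ℝ f x (EuclideanSpace.single i 1)| ≤ C * (1 + ‖x‖ ^ 2) ^ (-(1 + δ) / 2 : ℝ)) :
    ∃ C₀ δ : ℝ, 0 ≤ C₀ ∧ 0 < δ ∧ ∀ u,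
      ‖fderiv ℝ f u‖ ≤ C₀ * (1 + ‖u‖ ^ 2) ^ (-(1 + δ) / 2 : ℝ) := by
  choose Cc δc hC hδc hb using hder
  by_cases hd : d = 0
  · subst hd
    refine ⟨0, 1, le_refl _, one_pos, fun u => ?_⟩
    rw [zero_mul]
    apply ContinuousLinearMap.opNorm_le_bound _ le_rfl
    intro v
    rw [Subsingleton.elim v 0]
    simp
  · have hne : Nonempty (Fin d) := ⟨⟨0, Nat.pos_of_ne_zero hd⟩⟩
    set δ : ℝ := Finset.univ.inf' (Finset.univ_nonempty) δc with hδdef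
    have hδpos : 0 < δ := by
      rw [hδdef, Finset.lt_inf'_iff]
      exact fun i _ => hδc i
    have hδle : ∀ i, δ ≤ δc i := fun i => Finset.inf'_le _ (Finset.mem_univ i)
    refine ⟨∑ i, Cc i, δ, Finset.sum_nonneg fun i _ => (hC i).le, hδpos, fun u => ?_⟩
    apply ContinuousLinearMap.opNorm_le_bound
    · have h1 : (0:ℝ) ≤ (1 + ‖u‖ ^ 2) ^ (-(1 + δ) / 2 : ℝ) := Real.rpow_nonneg (by positivity) _
      have h0 : (0:ℝ) ≤ ∑ i, Cc i := Finset.sum_nonneg fun i _ => (hC i).le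
      positivity
    intro v
    calc ‖fderiv ℝ f u v‖ = |∑ i, v i * fderiv ℝ f u (EuclideanSpace.single i 1)| := by
          conv_lhs => rw [euclidean_decomp v]
          rw [map_sum]
          simp [Real.norm_eq_abs]
      _ ≤ ∑ i, |v i| * |fderiv ℝ f u (EuclideanSpace.single i 1)| := by
          refine (Finset.abs_sum_le_sum_abs _ _).trans ?_
          simp [abs_mul]
      _ ≤ ∑ i, ‖v‖ * (Cc i * (1 + ‖u‖ ^ 2) ^ (-(1 + δ) / 2 : ℝ)) := by
          apply Finset.sum_le_sum
          intro i _
          have h1 : |fderiv ℝ f u (EuclideanSpace.single i 1)| ≤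
              Cc i * (1 + ‖u‖ ^ 2) ^ (-(1 + δ) / 2 : ℝ) := by
            refine (hb i u).trans ?_
            apply mul_le_mul_of_nonneg_left _ (hC i).le
            apply Real.rpow_le_rpow_of_exponent_le (by nlinarith [sq_nonneg ‖u‖])
            have := hδle i
            linarith
          exact mul_le_mul (coord_abs_le_norm v i) h1 (abs_nonneg _) (norm_nonneg v)
      _ = (∑ i, Cc i) * (1 + ‖u‖ ^ 2) ^ (-(1 + δ) / 2 : ℝ) * ‖v‖ := by
          rw [← Finset.mul_sum, ← Finset.sum_mul]
          ring

/-- The (constant) derivative in `p` of `p ↦ z + s(x−z) + st(y−x)`. -/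
def Lmap (d : ℕ) (s t : ℝ) :
    (EuclideanSpace ℝ (Fin d) × EuclideanSpace ℝ (Fin d) × EuclideanSpace ℝ (Fin d)) →L[ℝ]
      EuclideanSpace ℝ (Fin d) :=
  (s - s * t) • (ContinuousLinearMap.fst ℝ _ _) +
    (s * t) • ((ContinuousLinearMap.fst ℝ _ _).comp (ContinuousLinearMap.snd ℝ _ _)) +
    (1 - s) • ((ContinuousLinearMap.snd ℝ (EuclideanSpace ℝ (Fin d)) _).comp
      (ContinuousLinearMap.snd ℝ _ _))

lemma Lmap_apply {d : ℕ} (s t : ℝ)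
    (p : EuclideanSpace ℝ (Fin d) × EuclideanSpace ℝ (Fin d) × EuclideanSpace ℝ (Fin d)) :
    Lmap d s t p = p.2.2 + s • (p.1 - p.2.2) + (s * t) • (p.2.1 - p.1) := by
  simp [Lmap]
  module

lemma Lmap_apply' {d : ℕ} (s t : ℝ)
    (p : EuclideanSpace ℝ (Fin d) × EuclideanSpace ℝ (Fin d) × EuclideanSpace ℝ (Fin d)) :
    Lmap d s t p = (s - s * t) • p.1 + (s * t) • p.2.1 + (1 - s) • p.2.2 := by
  simp [Lmap]

lemma Lmap_norm_le {d : ℕ} {s t : ℝ} (hs : s ∈ Icc (0:ℝ) 1) (ht : t ∈ Icc (0:ℝ) 1) :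
    ‖Lmap d s t‖ ≤ 1 := by
  apply ContinuousLinearMap.opNorm_le_bound _ zero_le_one
  intro p
  rw [Lmap_apply']
  have h1 : ‖p.1‖ ≤ ‖p‖ := norm_fst_le p
  have h2 : ‖p.2.1‖ ≤ ‖p‖ := (norm_fst_le p.2).trans (norm_snd_le p)
  have h3 : ‖p.2.2‖ ≤ ‖p‖ := (norm_snd_le p.2).trans (norm_snd_le p)
  obtain ⟨hs0, hs1⟩ := hs; obtain ⟨ht0, ht1⟩ := ht
  calc ‖(s - s * t) • p.1 + (s * t) • p.2.1 + (1 - s) • p.2.2‖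
      ≤ ‖(s - s * t) • p.1‖ + ‖(s * t) • p.2.1‖ + ‖(1 - s) • p.2.2‖ :=
        norm_add₃_le
    _ ≤ (s - s * t) * ‖p‖ + (s * t) * ‖p‖ + (1 - s) * ‖p‖ := by
        rw [norm_smul, norm_smul, norm_smul, Real.norm_eq_abs, Real.norm_eq_abs,
          Real.norm_eq_abs, abs_of_nonneg (by nlinarith), abs_of_nonneg (by nlinarith),
          abs_of_nonneg (by nlinarith)]
        have := norm_nonneg p
        gcongr <;> first | assumption | nlinarith
    _ = 1 * ‖p‖ := by ring

lemma Lmap_cont {d : ℕ} : Continuous fun q : ℝ × ℝ => Lmap d q.1 q.2 := by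
  unfold Lmap
  apply Continuous.add
  apply Continuous.add
  · exact (continuous_fst.sub (continuous_fst.mul continuous_snd)).smul continuous_const
  · exact (continuous_fst.mul continuous_snd).smul continuous_const
  · exact (continuous_const.sub continuous_fst).smul continuous_const

/-- The derivative in `p` of the integrand. -/
def Dmap (d : ℕ) (f : EuclideanSpace ℝ (Fin d) → ℝ) (s t : ℝ)
    (p : EuclideanSpace ℝ (Fin d) × EuclideanSpace ℝ (Fin d) × EuclideanSpace ℝ (Fin d)) :
    (EuclideanSpace ℝ (Fin d) × EuclideanSpace ℝ (Fin d) × EuclideanSpace ℝ (Fin d)) →L[ℝ] ℝ :=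
  s • ((fderiv ℝ f (Lmap d s t p)).comp (Lmap d s t))

end BrokenPathAux

open Real intervalIntegral

/-- Lemma 7.1 (2): with
`F(x,y,z) = ∫₀¹∫₀¹ σ₁ f(z + σ₁(x−z) + σ₁σ₂(y−x)) dσ₂ dσ₁`, every first-order
derivative of `F` satisfies `|x−z| |∂F| ≤ C` uniformly, provided all first
derivatives of `f` decay like `⟨x⟩^{-(1+δ)}`. -/
theorem broken_path_average_derivative_bound (d : ℕ)
    (f : EuclideanSpace ℝ (Fin d) → ℝ) (hf : ContDiff ℝ 1 f)
    (hder : ∀ i : Fin d, ∃ C δ : ℝ, 0 < C ∧ 0 < δ ∧ ∀ x,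
      |fderiv ℝ f x (EuclideanSpace.single i 1)| ≤
        C * (1 + ‖x‖ ^ 2) ^ (-(1 + δ) / 2 : ℝ)) :
    ∃ C : ℝ, ∀ x y z : EuclideanSpace ℝ (Fin d),
      ‖x - z‖ *
        ‖fderiv ℝ
          (fun p : EuclideanSpace ℝ (Fin d) × EuclideanSpace ℝ (Fin d) ×
              EuclideanSpace ℝ (Fin d) =>
            ∫ σ₁ in (0:ℝ)..1, ∫ σ₂ in (0:ℝ)..1,
              σ₁ * f (p.2.2 + σ₁ • (p.1 - p.2.2) + (σ₁ * σ₂) • (p.2.1 - p.1)))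
          (x, y, z)‖ ≤ C := by
  obtain ⟨C₀, δ, hC₀, hδ, hfd⟩ := fderiv_op_bound f hder
  refine ⟨C₀ * (2 * Idel δ), fun x y z => ?_⟩
  have hcontf : Continuous f := hf.continuous
  have hcontfd : Continuous (fderiv ℝ f) := hf.continuous_fderiv one_ne_zero
  have hgcont : ∀ p : EuclideanSpace ℝ (Fin d) × EuclideanSpace ℝ (Fin d) ×
      EuclideanSpace ℝ (Fin d), Continuous (Function.uncurry fun s t : ℝ => Lmap d s t p) :=
    fun p => Lmap_cont.clm_apply continuous_const
  have hintcont : ∀ p : EuclideanSpace ℝ (Fin d) × EuclideanSpace ℝ (Fin d) ×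
      EuclideanSpace ℝ (Fin d), Continuous (Function.uncurry fun s t : ℝ => s * f (Lmap d s t p)) :=
    fun p => continuous_fst.mul (hcontf.comp (hgcont p))
  have hDcont : ∀ p : EuclideanSpace ℝ (Fin d) × EuclideanSpace ℝ (Fin d) ×
      EuclideanSpace ℝ (Fin d), Continuous (Function.uncurry fun s t : ℝ => Dmap d f s t p) :=
    fun p => continuous_fst.smul ((hcontfd.comp (hgcont p)).clm_comp Lmap_cont)
  have hD1 : ∀ {s t : ℝ}, s ∈ Set.Icc (0:ℝ) 1 → t ∈ Set.Icc (0:ℝ) 1 → ∀ p,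
      ‖Dmap d f s t p‖ ≤
        C₀ * (s * ((1 + ‖Lmap d s t p‖ ^ 2) ^ (-(1+δ)/2 : ℝ))) := by
    intro s t hs ht p
    have hsm : ‖Dmap d f s t p‖ ≤
        s * ‖(fderiv ℝ f (Lmap d s t p)).comp (Lmap d s t)‖ := by
      unfold Dmap
      refine (norm_smul_le s ((fderiv ℝ f (Lmap d s t p)).comp (Lmap d s t))).trans
        (le_of_eq ?_)
      rw [Real.norm_eq_abs, abs_of_nonneg hs.1]
    refine hsm.trans ?_
    have h2 : (0:ℝ) ≤ (1 + ‖Lmap d s t p‖ ^ 2) ^ (-(1+δ)/2 : ℝ) :=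
      Real.rpow_nonneg (by positivity) _
    calc s * ‖(fderiv ℝ f (Lmap d s t p)).comp (Lmap d s t)‖
        ≤ s * (‖fderiv ℝ f (Lmap d s t p)‖ * ‖Lmap d s t‖) :=
          mul_le_mul_of_nonneg_left (ContinuousLinearMap.opNorm_comp_le _ _) hs.1
      _ ≤ s * ((C₀ * (1 + ‖Lmap d s t p‖ ^ 2) ^ (-(1+δ)/2 : ℝ)) * 1) := by
          apply mul_le_mul_of_nonneg_left _ hs.1
          exact mul_le_mul (hfd (Lmap d s t p)) (Lmap_norm_le hs ht)
            (norm_nonneg _) (mul_nonneg hC₀ h2)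
      _ = C₀ * (s * ((1 + ‖Lmap d s t p‖ ^ 2) ^ (-(1+δ)/2 : ℝ))) := by ring
  have hbr1 : ∀ u : EuclideanSpace ℝ (Fin d), ((1:ℝ) + ‖u‖ ^ 2) ^ (-(1+δ)/2 : ℝ) ≤ 1 :=
    fun u => Real.rpow_le_one_of_one_le_of_nonpos (by nlinarith [sq_nonneg ‖u‖])
      (by linarith)
  have hD2 : ∀ {s t : ℝ}, s ∈ Set.Icc (0:ℝ) 1 → t ∈ Set.Icc (0:ℝ) 1 → ∀ p,
      ‖Dmap d f s t p‖ ≤ C₀ := by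
    intro s t hs ht p
    refine (hD1 hs ht p).trans ?_
    have h1 := hbr1 (Lmap d s t p)
    have h2 : (0:ℝ) ≤ (1 + ‖Lmap d s t p‖ ^ 2) ^ (-(1+δ)/2 : ℝ) :=
      Real.rpow_nonneg (by positivity) _
    have h3 : s * ((1 + ‖Lmap d s t p‖ ^ 2) ^ (-(1+δ)/2 : ℝ)) ≤ 1 := by
      nlinarith [hs.1, hs.2]
    nlinarith [mul_le_mul_of_nonneg_left h3 hC₀]
  have hIoc : Set.uIoc (0:ℝ) 1 = Set.Ioc 0 1 := Set.uIoc_of_le zero_le_one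
  have hinner : ∀ s ∈ Set.Icc (0:ℝ) 1, ∀ p₁ : EuclideanSpace ℝ (Fin d) ×
      EuclideanSpace ℝ (Fin d) × EuclideanSpace ℝ (Fin d),
      HasFDerivAt (fun p => ∫ t in (0:ℝ)..1, s * f (Lmap d s t p))
        (∫ t in (0:ℝ)..1, Dmap d f s t p₁) p₁ := by
    intro s hs p₁
    apply intervalIntegral.hasFDerivAt_integral_of_dominated_of_fderiv_le
      (F := fun p t => s * f (Lmap d s t p)) (F' := fun p t => Dmap d f s t p)
      (bound := fun _ => C₀) (Metric.ball_mem_nhds _ one_pos)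
    · exact Filter.Eventually.of_forall fun p =>
        (((hintcont p).comp (continuous_const.prodMk continuous_id)) :
          Continuous fun t => s * f (Lmap d s t p)).aestronglyMeasurable
    · exact (((hintcont p₁).comp (continuous_const.prodMk continuous_id)) :
        Continuous fun t => s * f (Lmap d s t p₁)).intervalIntegrable _ _
    · exact (((hDcont p₁).comp (continuous_const.prodMk continuous_id)) :
        Continuous fun t => Dmap d f s t p₁).aestronglyMeasurable
    · refine Filter.Eventually.of_forall fun t ht p _ => ?_
      rw [hIoc] at ht
      exact hD2 hs (Set.Ioc_subset_Icc_self ht) p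
    · exact intervalIntegrable_const
    · refine Filter.Eventually.of_forall fun t ht p _ => ?_
      have h1 : HasFDerivAt f (fderiv ℝ f (Lmap d s t p)) (Lmap d s t p) :=
        (hf.differentiable one_ne_zero (Lmap d s t p)).hasFDerivAt
      exact (h1.comp p ((Lmap d s t).hasFDerivAt)).const_mul s
  have houter : HasFDerivAt
      (fun p : EuclideanSpace ℝ (Fin d) × EuclideanSpace ℝ (Fin d) ×
          EuclideanSpace ℝ (Fin d) =>
        ∫ s in (0:ℝ)..1, ∫ t in (0:ℝ)..1, s * f (Lmap d s t p))
      (∫ s in (0:ℝ)..1, ∫ t in (0:ℝ)..1, Dmap d f s t (x, y, z)) (x, y, z) := by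
    apply intervalIntegral.hasFDerivAt_integral_of_dominated_of_fderiv_le
      (F := fun p s => ∫ t in (0:ℝ)..1, s * f (Lmap d s t p))
      (F' := fun p s => ∫ t in (0:ℝ)..1, Dmap d f s t p)
      (bound := fun _ => C₀) (Metric.ball_mem_nhds _ one_pos)
    · exact Filter.Eventually.of_forall fun p =>
        (intervalIntegral.continuous_parametric_intervalIntegral_of_continuous'
          (hintcont p) 0 1).aestronglyMeasurable
    · exact (intervalIntegral.continuous_parametric_intervalIntegral_of_continuous'
        (hintcont (x, y, z)) 0 1).intervalIntegrable _ _
    · exact (intervalIntegral.continuous_parametric_intervalIntegral_of_continuous'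
        (hDcont (x, y, z)) 0 1).aestronglyMeasurable
    · refine Filter.Eventually.of_forall fun s hs p _ => ?_
      rw [hIoc] at hs
      have hb := intervalIntegral.norm_integral_le_of_norm_le_const
        (C := C₀) (f := fun t => Dmap d f s t p) (a := 0) (b := 1) ?_
      · simpa using hb
      · intro t ht
        rw [hIoc] at ht
        exact hD2 (Set.Ioc_subset_Icc_self hs) (Set.Ioc_subset_Icc_self ht) p
    · exact intervalIntegrable_const
    · refine Filter.Eventually.of_forall fun s hs p _ => ?_
      rw [hIoc] at hs
      exact hinner s (Set.Ioc_subset_Icc_self hs) p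
  have hfeq : (fun p : EuclideanSpace ℝ (Fin d) × EuclideanSpace ℝ (Fin d) ×
          EuclideanSpace ℝ (Fin d) =>
        ∫ σ₁ in (0:ℝ)..1, ∫ σ₂ in (0:ℝ)..1,
          σ₁ * f (p.2.2 + σ₁ • (p.1 - p.2.2) + (σ₁ * σ₂) • (p.2.1 - p.1)))
      = fun p => ∫ s in (0:ℝ)..1, ∫ t in (0:ℝ)..1, s * f (Lmap d s t p) := by
    funext p
    simp only [Lmap_apply]
  rw [hfeq, houter.fderiv]
  have hn1 : ∀ s ∈ Set.Icc (0:ℝ) 1, ‖∫ t in (0:ℝ)..1, Dmap d f s t (x, y, z)‖ ≤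
      ∫ t in (0:ℝ)..1,
        C₀ * (s * ((1 + ‖Lmap d s t (x, y, z)‖ ^ 2) ^ (-(1+δ)/2 : ℝ))) := by
    intro s hs
    refine (intervalIntegral.norm_integral_le_integral_norm zero_le_one).trans ?_
    apply intervalIntegral.integral_mono_on zero_le_one
    · exact ((((hDcont (x, y, z)).comp (continuous_const.prodMk continuous_id)) :
        Continuous fun t => Dmap d f s t (x, y, z)).norm).intervalIntegrable _ _
    · exact (continuous_const.mul (continuous_const.mul
        (cont_bracket ((hgcont (x, y, z)).comp
          (continuous_const.prodMk continuous_id)) _))).intervalIntegrable _ _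
    · exact fun t ht => hD1 hs ht _
  have hn2 : ‖∫ s in (0:ℝ)..1, ∫ t in (0:ℝ)..1, Dmap d f s t (x, y, z)‖ ≤
      C₀ * ∫ s in (0:ℝ)..1, ∫ t in (0:ℝ)..1,
        s * ((1 + ‖Lmap d s t (x, y, z)‖ ^ 2) ^ (-(1+δ)/2 : ℝ)) := by
    refine (intervalIntegral.norm_integral_le_integral_norm zero_le_one).trans ?_
    have hmono : (∫ s in (0:ℝ)..1, ‖∫ t in (0:ℝ)..1, Dmap d f s t (x, y, z)‖) ≤
        ∫ s in (0:ℝ)..1, ∫ t in (0:ℝ)..1,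
          C₀ * (s * ((1 + ‖Lmap d s t (x, y, z)‖ ^ 2) ^ (-(1+δ)/2 : ℝ))) := by
      apply intervalIntegral.integral_mono_on zero_le_one
      · exact ((intervalIntegral.continuous_parametric_intervalIntegral_of_continuous'
          (hDcont (x, y, z)) 0 1).norm).intervalIntegrable _ _
      · refine (intervalIntegral.continuous_parametric_intervalIntegral_of_continuous'
          ?_ 0 1).intervalIntegrable _ _
        exact continuous_const.mul (continuous_fst.mul
          (cont_bracket (hgcont (x, y, z)) _))
      · exact hn1
    refine hmono.trans (le_of_eq ?_)
    simp only [intervalIntegral.integral_const_mul]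
  calc ‖x - z‖ * ‖∫ s in (0:ℝ)..1, ∫ t in (0:ℝ)..1, Dmap d f s t (x, y, z)‖
      ≤ ‖x - z‖ * (C₀ * ∫ s in (0:ℝ)..1, ∫ t in (0:ℝ)..1,
          s * ((1 + ‖Lmap d s t (x, y, z)‖ ^ 2) ^ (-(1+δ)/2 : ℝ))) :=
        mul_le_mul_of_nonneg_left hn2 (norm_nonneg _)
    _ = C₀ * (‖x - z‖ * ∫ s in (0:ℝ)..1, ∫ t in (0:ℝ)..1,
          s * ((1 + ‖Lmap d s t (x, y, z)‖ ^ 2) ^ (-(1+δ)/2 : ℝ))) := by ring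
    _ ≤ C₀ * (2 * Idel δ) := by
        apply mul_le_mul_of_nonneg_left _ hC₀
        have hk := key2 hδ x y z
        simp only [Lmap_apply]
        exact hk
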